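/- arXiv:2508.03231 — 2 statements merged into one kernel-verified Lean document; each statement's English description precedes it below -/
import Mathlib

section
/- Let A = ℤ ⊕ ℤ/2ℤ, write elements as a·z + b·ε where z generates the ℤ factor and ε the ℤ/2ℤ factor. Then the pair (a·z + b·ε, c·z + d·ε) generates A if and only if gcd(a, c) = 1 and a·d − b·c is odd (with b, d ∈ {0,1} viewed as integers). -/
lemma cast_eq_one_iff_odd (k : ℤ) : ((k : ZMod 2) = 1) ↔ Odd k := by
  rw [show (1:ZMod 2) = ((1:ℤ):ZMod 2) by norm_num, ZMod.intCast_eq_intCast_iff,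
    Int.ModEq, Int.odd_iff]
  norm_num

lemma cast_eq_zero_iff_even (k : ℤ) : ((k : ZMod 2) = 0) ↔ Even k := by
  rw [ZMod.intCast_zmod_eq_zero_iff_dvd]
  norm_num [Int.even_iff, Int.emod_emod_of_dvd, ← Int.dvd_iff_emod_eq_zero]

lemma smul_cast (m : ℤ) (b : ZMod 2) : m • b = ((m * (b.val : ℤ) : ℤ) : ZMod 2) := by
  rw [zsmul_eq_mul]
  push_cast [ZMod.natCast_val, ZMod.cast_id]
  ring

/-- In A = ℤ ⊕ ℤ/2ℤ, a pair (a·z + b·ε, c·z + d·ε) generates A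
if and only if gcd(a, c) = 1 and a·d − b·c is odd (b, d lifted to {0,1} ⊆ ℤ). -/
theorem stmt10 (a c : ℤ) (b d : ZMod 2) :
    AddSubgroup.closure {((a, b) : ℤ × ZMod 2), ((c, d) : ℤ × ZMod 2)} = ⊤ ↔
    IsCoprime a c ∧ Odd (a * (d.val : ℤ) - (b.val : ℤ) * c) := by
  set B : ℤ := (b.val : ℤ) with hB
  set D : ℤ := (d.val : ℤ) with hD
  constructor
  · intro h
    have h1 : ((1:ℤ), (0:ZMod 2)) ∈ AddSubgroup.closure
        {((a, b) : ℤ × ZMod 2), ((c, d) : ℤ × ZMod 2)} := by rw [h]; trivial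
    have h2 : ((0:ℤ), (1:ZMod 2)) ∈ AddSubgroup.closure
        {((a, b) : ℤ × ZMod 2), ((c, d) : ℤ × ZMod 2)} := by rw [h]; trivial
    rw [AddSubgroup.mem_closure_pair] at h1 h2
    obtain ⟨m, n, hmn⟩ := h1
    obtain ⟨p, q, hpq⟩ := h2
    have hmn1 : m * a + n * c = 1 := congrArg Prod.fst hmn
    have hmn2 : m • b + n • d = 0 := congrArg Prod.snd hmn
    have hpq1 : p * a + q * c = 0 := congrArg Prod.fst hpq
    have hpq2 : p • b + q • d = 1 := congrArg Prod.snd hpq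
    rw [smul_cast, smul_cast, ← Int.cast_add, cast_eq_zero_iff_even] at hmn2
    rw [smul_cast, smul_cast, ← Int.cast_add, cast_eq_one_iff_odd] at hpq2
    refine ⟨⟨m, n, by linarith⟩, ?_⟩
    have key : (m * q - n * p) * (a * D - B * c) =
        (m * a + n * c) * (p * B + q * D) - (m * B + n * D) * (p * a + q * c) := by ring
    have hodd : Odd ((m * q - n * p) * (a * D - B * c)) := by
      rw [key, hmn1, hpq1]
      rw [one_mul, mul_zero, sub_zero]; exact hpq2
    exact (Int.odd_mul.mp hodd).2
  · rintro ⟨⟨m, n, hmn⟩, hodd⟩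
    rw [eq_top_iff]
    set S := AddSubgroup.closure {((a, b) : ℤ × ZMod 2), ((c, d) : ℤ × ZMod 2)} with hS
    have hab : ((a, b) : ℤ × ZMod 2) ∈ S := AddSubgroup.subset_closure (by simp)
    have hcd : ((c, d) : ℤ × ZMod 2) ∈ S := AddSubgroup.subset_closure (by simp)
    -- u1 = (1, t)
    have hu1 : (((1:ℤ), m • b + n • d) : ℤ × ZMod 2) ∈ S := by
      have h := S.add_mem (S.zsmul_mem hab m) (S.zsmul_mem hcd n)
      have he : m • ((a, b) : ℤ × ZMod 2) + n • ((c, d) : ℤ × ZMod 2)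
          = (((1:ℤ), m • b + n • d) : ℤ × ZMod 2) := by
        ext
        · simpa using hmn
        · simp
      rwa [he] at h
    -- (2, 0) ∈ S
    have h20 : (((2:ℤ), (0:ZMod 2)) : ℤ × ZMod 2) ∈ S := by
      have h := S.zsmul_mem hu1 2
      have he : (2:ℤ) • (((1:ℤ), m • b + n • d) : ℤ × ZMod 2)
          = (((2:ℤ), (0:ZMod 2)) : ℤ × ZMod 2) := by
        ext
        · simp
        · show (2:ℤ) • (m • b + n • d) = 0
          rw [two_zsmul]
          have h2 : ∀ x : ZMod 2, x + x = 0 := by decide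
          exact h2 _
      rwa [he] at h
    -- u2 = (2ac, 1) ∈ S
    have hcbad : c • b + a • d = 1 := by
      rw [smul_cast, smul_cast, ← Int.cast_add, cast_eq_one_iff_odd]
      obtain ⟨k, hk⟩ := hodd
      exact ⟨k + B * c, by linear_combination hk⟩
    have hu2 : (((2 * (a * c) : ℤ), (1:ZMod 2)) : ℤ × ZMod 2) ∈ S := by
      have h := S.add_mem (S.zsmul_mem hab c) (S.zsmul_mem hcd a)
      have he : c • ((a, b) : ℤ × ZMod 2) + a • ((c, d) : ℤ × ZMod 2)
          = (((2 * (a * c) : ℤ), (1:ZMod 2)) : ℤ × ZMod 2) := by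
        ext
        · simp; ring
        · simpa using hcbad
      rwa [he] at h
    -- (0,1) ∈ S
    have he2 : (((0:ℤ), (1:ZMod 2)) : ℤ × ZMod 2) ∈ S := by
      have h := S.add_mem hu2 (S.zsmul_mem h20 (-(a * c)))
      have he : (((2 * (a * c) : ℤ), (1:ZMod 2)) : ℤ × ZMod 2)
          + (-(a * c)) • (((2:ℤ), (0:ZMod 2)) : ℤ × ZMod 2)
          = (((0:ℤ), (1:ZMod 2)) : ℤ × ZMod 2) := by
        ext
        · simp; ring
        · simp
      rwa [he] at h
    -- (1,0) ∈ S
    have he1 : (((1:ℤ), (0:ZMod 2)) : ℤ × ZMod 2) ∈ S := by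
      have h := S.add_mem hu1 (S.zsmul_mem he2 (-((m • b + n • d).val : ℤ)))
      have he : (((1:ℤ), m • b + n • d) : ℤ × ZMod 2)
          + (-((m • b + n • d).val : ℤ)) • (((0:ℤ), (1:ZMod 2)) : ℤ × ZMod 2)
          = (((1:ℤ), (0:ZMod 2)) : ℤ × ZMod 2) := by
        ext
        · simp
        · simp [smul_cast, ZMod.natCast_val, ZMod.cast_id]
          have h2 : (2 : ZMod 2) = 0 := rfl
          linear_combination ((m : ZMod 2) * b + (n : ZMod 2) * d) * h2
      rwa [he] at h
    rintro ⟨x, y⟩ -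
    have h := S.add_mem (S.zsmul_mem he1 x) (S.zsmul_mem he2 ((y.val : ℤ)))
    have he : x • (((1:ℤ), (0:ZMod 2)) : ℤ × ZMod 2)
        + ((y.val : ℤ)) • (((0:ℤ), (1:ZMod 2)) : ℤ × ZMod 2)
        = ((x, y) : ℤ × ZMod 2) := by
      ext
      · simp
      · simp [smul_cast, ZMod.natCast_val, ZMod.cast_id]
    rwa [he] at h
end

section
/- Let a₁, a₂ ∈ ℕ^n with a₁ ≱ a₂ and a₂ ≱ a₁ (coordinatewise). Let v ∈ ℤ^n, let k ≥ 0 be an integer, and suppose k is the minimum natural number such that a₁ + k·v ≥ a₂ + w coordinatewise, where w ∈ ℤ^n is given. Assume k ≥ 2, a₁ + v ≱ a₂ + w, and a₂ + w ≱ a₁ + v. Then a₁ + k·v − w ≱ a₂ + v and a₂ + v ≱ a₁ + k·v − w. -/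
/-- Jumping between roots: if a₁, a₂ are incomparable nonnegative vectors,
k ≥ 2 is the minimal natural number with a₁ + k·v ≥ a₂ + w, and the endpoints a₁ + v and
a₂ + w are incomparable, then the new endpoints a₁ + k·v − w and a₂ + v are incomparable. -/
theorem stmt11 (n : ℕ) (a₁ a₂ v w : Fin n → ℤ)
    (ha₁ : 0 ≤ a₁) (ha₂ : 0 ≤ a₂)
    (hinc₁ : ¬ a₂ ≤ a₁) (hinc₂ : ¬ a₁ ≤ a₂)
    (k : ℕ) (hk2 : 2 ≤ k)
    (hmin : a₂ + w ≤ a₁ + (k : ℤ) • v ∧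
      ∀ k' : ℕ, k' < k → ¬ (a₂ + w ≤ a₁ + (k' : ℤ) • v))
    (hroot₁ : ¬ a₂ + w ≤ a₁ + v) (hroot₂ : ¬ a₁ + v ≤ a₂ + w) :
    ¬ (a₂ + v ≤ a₁ + (k : ℤ) • v - w) ∧ ¬ (a₁ + (k : ℤ) • v - w ≤ a₂ + v) := by
  have hcast : ((k - 1 : ℕ) : ℤ) = (k : ℤ) - 1 := by
    have : 1 ≤ k := by omega
    push_cast [this]; ring
  constructor
  · intro h
    refine hmin.2 (k - 1) (by omega) ?_
    intro i
    have hi := h i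
    simp only [Pi.add_apply, Pi.smul_apply, Pi.sub_apply, smul_eq_mul, hcast] at hi ⊢
    linarith only [hi]
  · intro h
    have hv : 0 ≤ v := by
      intro i
      have h1 := hmin.1 i
      have h2 := h i
      simp only [Pi.add_apply, Pi.smul_apply, Pi.sub_apply, Pi.zero_apply,
        smul_eq_mul] at h1 h2 ⊢
      linarith only [h1, h2]
    apply hroot₂
    intro i
    have h2 := h i
    have hvi := hv i
    have hk : (2 : ℤ) ≤ (k : ℤ) := by exact_mod_cast hk2
    simp only [Pi.add_apply, Pi.smul_apply, Pi.sub_apply, Pi.zero_apply,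
      smul_eq_mul] at h2 hvi ⊢
    nlinarith only [h2, hvi, hk]
end
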